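/- For any language L over {a₁,...,a_k} with semilinear Parikh image, the Parikh image of its Kleene star L* is semilinear. -/

import Mathlib

/-- Parikh vector of a word over a `k`-letter alphabet. -/
def Par {k : ℕ} (w : List (Fin k)) : Fin k → ℕ := fun i => w.count i

/-- The linear set with base `b` and periods `ps`. -/
def LinSet {k : ℕ} (b : Fin k → ℕ) (ps : List (Fin k → ℕ)) : Set (Fin k → ℕ) :=
  {v | ∃ lam : Fin ps.length → ℕ, v = b + ∑ i, lam i • ps.get i}

/-- The semilinear set described by a finite list of (base, periods) pairs. -/
def SemiSet {k : ℕ} (d : List ((Fin k → ℕ) × List (Fin k → ℕ))) : Set (Fin k → ℕ) :=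
  {v | ∃ p ∈ d, v ∈ LinSet p.1 p.2}

/-- A set is semilinear if it is a finite union of linear sets. -/
def IsSemilinear {k : ℕ} (S : Set (Fin k → ℕ)) : Prop := ∃ d, S = SemiSet d

/-! ### Auxiliary machinery -/

/-- Set of finite sums of elements of `S`. -/
def SumsOf {k : ℕ} (S : Set (Fin k → ℕ)) : Set (Fin k → ℕ) :=
  {v | ∃ l : List (Fin k → ℕ), (∀ x ∈ l, x ∈ S) ∧ v = l.sum}

lemma par_nil {k : ℕ} : Par ([] : List (Fin k)) = 0 := by
  funext i; simp [Par]

lemma par_append {k : ℕ} (u v : List (Fin k)) : Par (u ++ v) = Par u + Par v := by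
  funext i; simp [Par, List.count_append]

lemma par_flatten {k : ℕ} (S : List (List (Fin k))) :
    Par S.flatten = (S.map Par).sum := by
  induction S with
  | nil => simpa using par_nil
  | cons u S ih => simp [par_append, ih]

/-- One direction of the list characterization of linear combinations. -/
lemma exists_list_of_lam {k : ℕ} (ps : List (Fin k → ℕ)) (lam : Fin ps.length → ℕ) :
    ∃ l : List (Fin k → ℕ), (∀ x ∈ l, x ∈ ps) ∧
      (∑ i, lam i • ps.get i) = l.sum := by
  refine ⟨(List.ofFn fun i : Fin ps.length => List.replicate (lam i) (ps.get i)).flatten,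
    ?_, ?_⟩
  · intro x hx
    rcases List.mem_flatten.mp hx with ⟨m, hm, hxm⟩
    obtain ⟨i, rfl⟩ := Set.mem_range.mp ((List.mem_ofFn' _ _).mp hm)
    rw [List.eq_of_mem_replicate hxm]
    exact List.get_mem ps i
  · rw [List.sum_flatten, List.map_ofFn, List.sum_ofFn]
    simp [List.sum_replicate]

/-- The other direction. -/
lemma exists_lam_of_list {k : ℕ} (ps : List (Fin k → ℕ)) :
    ∀ l : List (Fin k → ℕ), (∀ x ∈ l, x ∈ ps) →
      ∃ lam : Fin ps.length → ℕ, l.sum = ∑ i, lam i • ps.get i := by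
  intro l
  induction l with
  | nil => intro _; exact ⟨fun _ => 0, by simp⟩
  | cons x l ih =>
    intro h
    obtain ⟨lam, hlam⟩ := ih fun y hy => h y (List.mem_cons_of_mem _ hy)
    obtain ⟨i0, hi0⟩ := List.mem_iff_get.mp (h x (List.mem_cons_self))
    refine ⟨fun i => lam i + (if i = i0 then 1 else 0), ?_⟩
    have : (∑ i, (lam i + if i = i0 then 1 else 0) • ps.get i)
        = (∑ i, lam i • ps.get i) + ps.get i0 := by
      simp only [add_smul, ite_smul, one_smul, zero_smul, Finset.sum_add_distrib,
        Finset.sum_ite_eq', Finset.mem_univ, if_true]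
    rw [this, List.sum_cons, hlam, ← hi0]
    exact add_comm _ _

lemma mem_LinSet_iff {k : ℕ} {b : Fin k → ℕ} {ps : List (Fin k → ℕ)} {v : Fin k → ℕ} :
    v ∈ LinSet b ps ↔ ∃ l : List (Fin k → ℕ), (∀ x ∈ l, x ∈ ps) ∧ v = b + l.sum := by
  constructor
  · rintro ⟨lam, rfl⟩
    obtain ⟨l, hl, hs⟩ := exists_list_of_lam ps lam
    exact ⟨l, hl, by rw [hs]⟩
  · rintro ⟨l, hl, rfl⟩
    obtain ⟨lam, hlam⟩ := exists_lam_of_list ps l hl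
    exact ⟨lam, by rw [hlam]⟩

/-- Split a list whose elements all satisfy `P ∨ Q` into two sums. -/
lemma partition_sum {k : ℕ} {P Q : (Fin k → ℕ) → Prop} :
    ∀ l : List (Fin k → ℕ), (∀ x ∈ l, P x ∨ Q x) →
      ∃ l₁ l₂ : List (Fin k → ℕ), (∀ x ∈ l₁, P x) ∧ (∀ x ∈ l₂, Q x) ∧
        l.sum = l₁.sum + l₂.sum := by
  intro l
  induction l with
  | nil => intro _; exact ⟨[], [], by simp, by simp, by simp⟩
  | cons x l ih =>
    intro h
    obtain ⟨l₁, l₂, h₁, h₂, hsum⟩ := ih fun y hy => h y (List.mem_cons_of_mem _ hy)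
    rcases h x (List.mem_cons_self) with hx | hx
    · refine ⟨x :: l₁, l₂, ?_, h₂, ?_⟩
      · intro y hy; rcases List.mem_cons.mp hy with rfl | hy
        · exact hx
        · exact h₁ y hy
      · simp only [List.sum_cons, hsum]; ring
    · refine ⟨l₁, x :: l₂, h₁, ?_, ?_⟩
      · intro y hy; rcases List.mem_cons.mp hy with rfl | hy
        · exact hx
        · exact h₂ y hy
      · simp only [List.sum_cons, hsum]; ring

lemma sumsOf_union {k : ℕ} {A B : Set (Fin k → ℕ)} {v : Fin k → ℕ} :
    v ∈ SumsOf (A ∪ B) ↔ ∃ x y, x ∈ SumsOf A ∧ y ∈ SumsOf B ∧ v = x + y := by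
  constructor
  · rintro ⟨l, hl, rfl⟩
    obtain ⟨l₁, l₂, h₁, h₂, hsum⟩ := partition_sum (P := fun x => x ∈ A) (Q := fun x => x ∈ B) l hl
    exact ⟨l₁.sum, l₂.sum, ⟨l₁, h₁, rfl⟩, ⟨l₂, h₂, rfl⟩, hsum⟩
  · rintro ⟨x, y, ⟨l₁, h₁, rfl⟩, ⟨l₂, h₂, rfl⟩, rfl⟩
    refine ⟨l₁ ++ l₂, ?_, by simp⟩
    intro z hz
    rcases List.mem_append.mp hz with hz | hz
    · exact Or.inl (h₁ z hz)
    · exact Or.inr (h₂ z hz)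

lemma sumsOf_linset {k : ℕ} {b : Fin k → ℕ} {ps : List (Fin k → ℕ)} {v : Fin k → ℕ} :
    v ∈ SumsOf (LinSet b ps) ↔ v = 0 ∨ v ∈ LinSet b (b :: ps) := by
  constructor
  · rintro ⟨l, hl, rfl⟩
    induction l with
    | nil => exact Or.inl rfl
    | cons x l ih =>
      have hx := hl x (List.mem_cons_self)
      obtain ⟨lx, hlx, rfl⟩ := mem_LinSet_iff.mp hx
      rcases ih (fun y hy => hl y (List.mem_cons_of_mem _ hy)) with h0 | hmem
      · rw [List.sum_cons, h0, add_zero]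
        exact Or.inr (mem_LinSet_iff.mpr ⟨lx, fun y hy => List.mem_cons_of_mem _ (hlx y hy), rfl⟩)
      · obtain ⟨l₂, hl₂, hsum⟩ := mem_LinSet_iff.mp hmem
        refine Or.inr (mem_LinSet_iff.mpr ⟨lx ++ b :: l₂, ?_, ?_⟩)
        · intro y hy
          rcases List.mem_append.mp hy with hy | hy
          · exact List.mem_cons_of_mem _ (hlx y hy)
          · rcases List.mem_cons.mp hy with rfl | hy
            · exact List.mem_cons_self
            · exact hl₂ y hy
        · rw [List.sum_cons, hsum]
          simp only [List.sum_append, List.sum_cons]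
          ring
  · rintro (rfl | hv)
    · exact ⟨[], by simp, by simp⟩
    · obtain ⟨l, hl, rfl⟩ := mem_LinSet_iff.mp hv
      obtain ⟨l₁, l₂, h₁, h₂, hsum⟩ :=
        partition_sum (P := fun x => x = b) (Q := fun x => x ∈ ps) l
          (fun x hx => List.mem_cons.mp (hl x hx))
      refine ⟨(b + l₂.sum) :: l₁, ?_, ?_⟩
      · intro y hy
        rcases List.mem_cons.mp hy with rfl | hy
        · exact mem_LinSet_iff.mpr ⟨l₂, h₂, rfl⟩
        · rw [h₁ y hy]
          exact mem_LinSet_iff.mpr ⟨[], by simp, by simp⟩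
      · rw [hsum, List.sum_cons]; ring

/-- Sum decomposition of a linear set with concatenated periods. -/
lemma linset_add {k : ℕ} {b c : Fin k → ℕ} {ps qs : List (Fin k → ℕ)} {v : Fin k → ℕ} :
    v ∈ LinSet (b + c) (ps ++ qs) ↔
      ∃ x y, x ∈ LinSet b ps ∧ y ∈ LinSet c qs ∧ v = x + y := by
  constructor
  · intro hv
    obtain ⟨l, hl, rfl⟩ := mem_LinSet_iff.mp hv
    obtain ⟨l₁, l₂, h₁, h₂, hsum⟩ :=
      partition_sum (P := fun x => x ∈ ps) (Q := fun x => x ∈ qs) l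
        (fun x hx => List.mem_append.mp (hl x hx))
    exact ⟨b + l₁.sum, c + l₂.sum, mem_LinSet_iff.mpr ⟨l₁, h₁, rfl⟩,
      mem_LinSet_iff.mpr ⟨l₂, h₂, rfl⟩, by rw [hsum]; ring⟩
  · rintro ⟨x, y, hx, hy, rfl⟩
    obtain ⟨l₁, h₁, rfl⟩ := mem_LinSet_iff.mp hx
    obtain ⟨l₂, h₂, rfl⟩ := mem_LinSet_iff.mp hy
    refine mem_LinSet_iff.mpr ⟨l₁ ++ l₂, ?_, ?_⟩
    · intro z hz
      rcases List.mem_append.mp hz with hz | hz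
      · exact List.mem_append.mpr (Or.inl (h₁ z hz))
      · exact List.mem_append.mpr (Or.inr (h₂ z hz))
    · rw [List.sum_append]; ring

/-- The bases/periods description of the Kleene closure of a semilinear set. -/
def starD {k : ℕ} : List ((Fin k → ℕ) × List (Fin k → ℕ)) →
    List ((Fin k → ℕ) × List (Fin k → ℕ))
  | [] => [(0, [])]
  | (b, ps) :: t => starD t ++ (starD t).map (fun q => (b + q.1, (b :: ps) ++ q.2))

lemma semiSet_cons {k : ℕ} {p : (Fin k → ℕ) × List (Fin k → ℕ)}
    {d : List ((Fin k → ℕ) × List (Fin k → ℕ))} :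
    SemiSet (p :: d) = LinSet p.1 p.2 ∪ SemiSet d := by
  ext v; simp [SemiSet]

lemma semiSet_append {k : ℕ} {d₁ d₂ : List ((Fin k → ℕ) × List (Fin k → ℕ))} {v : Fin k → ℕ} :
    v ∈ SemiSet (d₁ ++ d₂) ↔ v ∈ SemiSet d₁ ∨ v ∈ SemiSet d₂ := by
  simp only [SemiSet, Set.mem_setOf_eq, List.mem_append]
  constructor
  · rintro ⟨p, hp | hp, h⟩
    exacts [Or.inl ⟨p, hp, h⟩, Or.inr ⟨p, hp, h⟩]
  · rintro (⟨p, hp, h⟩ | ⟨p, hp, h⟩)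
    exacts [⟨p, Or.inl hp, h⟩, ⟨p, Or.inr hp, h⟩]

lemma sumsOf_semiSet {k : ℕ} (d : List ((Fin k → ℕ) × List (Fin k → ℕ))) :
    SumsOf (SemiSet d) = SemiSet (starD d) := by
  induction d with
  | nil =>
    ext v
    constructor
    · rintro ⟨l, hl, rfl⟩
      have : l = [] := by
        cases l with
        | nil => rfl
        | cons x l => exact absurd (hl x (List.mem_cons_self)) (by simp [SemiSet])
      subst this
      exact ⟨(0, []), List.mem_cons_self, ⟨fun _ => 0, by simp⟩⟩
    · rintro ⟨p, hp, hv⟩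
      simp only [starD, List.mem_cons, List.not_mem_nil, or_false] at hp
      subst hp
      obtain ⟨lam, rfl⟩ := hv
      exact ⟨[], by simp, by simp⟩
  | cons p t ih =>
    obtain ⟨b, ps⟩ := p
    ext v
    rw [semiSet_cons]
    constructor
    · intro hv
      obtain ⟨x, y, hx, hy, rfl⟩ := sumsOf_union.mp hv
      rw [ih] at hy
      rcases sumsOf_linset.mp hx with rfl | hx
      · rw [zero_add]
        obtain ⟨q, hq, hyq⟩ := hy
        exact ⟨q, List.mem_append.mpr (Or.inl hq), hyq⟩
      · obtain ⟨q, hq, hyq⟩ := hy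
        refine ⟨(b + q.1, (b :: ps) ++ q.2), ?_, ?_⟩
        · exact List.mem_append.mpr (Or.inr (List.mem_map.mpr ⟨q, hq, rfl⟩))
        · exact linset_add.mpr ⟨x, y, hx, hyq, rfl⟩
    · rintro ⟨q', hq', hv⟩
      rcases List.mem_append.mp hq' with hq' | hq'
      · -- v comes from the "empty first component" part
        rw [show q' = (q'.1, q'.2) from rfl] at hv
        have hy : v ∈ SumsOf (SemiSet t) := by rw [ih]; exact ⟨q', hq', hv⟩
        have hx : (0 : Fin k → ℕ) ∈ SumsOf (LinSet b ps) := sumsOf_linset.mpr (Or.inl rfl)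
        exact sumsOf_union.mpr ⟨0, v, hx, hy, (zero_add v).symm⟩
      · obtain ⟨q, hq, rfl⟩ := List.mem_map.mp hq'
        obtain ⟨x, y, hx, hy, rfl⟩ := linset_add.mp hv
        refine sumsOf_union.mpr ⟨x, y, sumsOf_linset.mpr (Or.inr hx), ?_, rfl⟩
        rw [ih]
        exact ⟨q, hq, hy⟩

lemma par_kstar {k : ℕ} (L : Language (Fin k)) :
    Par '' (KStar.kstar L : Language (Fin k)) = SumsOf (Par '' L) := by
  ext v
  constructor
  · rintro ⟨w, hw, rfl⟩
    obtain ⟨S, rfl, hS⟩ := Language.mem_kstar.mp hw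
    refine ⟨S.map Par, ?_, par_flatten S⟩
    intro x hx
    obtain ⟨u, hu, rfl⟩ := List.mem_map.mp hx
    exact ⟨u, hS u hu, rfl⟩
  · rintro ⟨l, hl, rfl⟩
    induction l with
    | nil => exact ⟨[], L.nil_mem_kstar, by simpa using par_nil⟩
    | cons x l ih =>
      obtain ⟨w, hw, hPar⟩ := ih fun y hy => hl y (List.mem_cons_of_mem _ hy)
      obtain ⟨u, hu, rfl⟩ := hl x (List.mem_cons_self)
      obtain ⟨S, rfl, hS⟩ := Language.mem_kstar.mp hw
      refine ⟨u ++ S.flatten, ?_, ?_⟩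
      · apply Language.mem_kstar.mpr
        refine ⟨u :: S, by simp, ?_⟩
        intro y hy
        rcases List.mem_cons.mp hy with rfl | hy
        · exact hu
        · exact hS y hy
      · rw [par_append, hPar, List.sum_cons]
    
/-- if `Par(L)` is semilinear then so is `Par(L*)` (Kleene star). -/
theorem parikh_kstar_semilinear {k : ℕ} (L : Language (Fin k))
    (hL : IsSemilinear (Par '' L)) : IsSemilinear (Par '' (KStar.kstar L : Language (Fin k))) := by
  obtain ⟨d, hd⟩ := hL
  exact ⟨starD d, by rw [par_kstar, hd, sumsOf_semiSet]⟩
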